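/- arXiv:2405.13136 — 6 statements merged into one kernel-verified Lean document; each statement's English description precedes it below -/
import Mathlib

section
/- Consider a 2-armed bandit with deterministic rewards r_1 > r_2 ≥ 0, gap Δ := r_1 − r_2, and a softmax policy assigning probability p ∈ (0,1) to arm 1. Let ĝ be the importance-sampling policy gradient estimator: with probability p, ĝ = ((1−p)r_1, −(1−p)r_1), and with probability 1−p, ĝ = (−p·r_2, p·r_2). Then E[‖ĝ‖²] = 2p(1−p)[(1−p)r_1² + p·r_2²], the true gradient g satisfies ‖g‖ = √2·p(1−p)·Δ, and hence E[‖ĝ‖²] = (√2·[(1−p)r_1² + p·r_2²]/Δ)·‖g‖. -/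
theorem stmt_5 (r1 r2 p : ℝ) (h21 : r2 < r1) (h2 : 0 ≤ r2) (hp0 : 0 < p) (hp1 : p < 1) :
    let Δ := r1 - r2
    let Esq := p * (((1 - p) * r1) ^ 2 + (-((1 - p) * r1)) ^ 2)
      + (1 - p) * ((-(p * r2)) ^ 2 + (p * r2) ^ 2)
    let gnorm := Real.sqrt ((p * (r1 - (p * r1 + (1 - p) * r2))) ^ 2
      + ((1 - p) * (r2 - (p * r1 + (1 - p) * r2))) ^ 2)
    Esq = 2 * p * (1 - p) * ((1 - p) * r1 ^ 2 + p * r2 ^ 2) ∧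
    gnorm = Real.sqrt 2 * (p * (1 - p) * Δ) ∧
    Esq = Real.sqrt 2 * ((1 - p) * r1 ^ 2 + p * r2 ^ 2) / Δ * gnorm := by
  intro Δ Esq gnorm
  have hΔ : 0 < Δ := sub_pos.mpr h21
  have hpos : 0 ≤ p * (1 - p) * Δ := by
    have : (0:ℝ) < 1 - p := by linarith
    positivity
  have hg : gnorm = Real.sqrt 2 * (p * (1 - p) * Δ) := by
    show Real.sqrt _ = _
    rw [show (p * (r1 - (p * r1 + (1 - p) * r2))) ^ 2
      + ((1 - p) * (r2 - (p * r1 + (1 - p) * r2))) ^ 2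
      = 2 * (p * (1 - p) * Δ) ^ 2 by simp only [Δ]; ring]
    rw [Real.sqrt_mul (by norm_num), Real.sqrt_sq hpos]
  refine ⟨by simp only [Esq]; ring, hg, ?_⟩
  rw [hg]
  have h2' : Real.sqrt 2 * Real.sqrt 2 = 2 := Real.mul_self_sqrt (by norm_num)
  simp only [Esq]
  field_simp
  ring_nf
  rw [Real.sq_sqrt (by norm_num : (0:ℝ) ≤ 2)]
  ring
end

section
/- Let π_τ* = softmax(r/τ) be the softmax policy for reward vector r ∈ ℝ^A with temperature τ > 0, and let π* be the deterministic policy on the optimal arm a* = argmax r. Then ⟨π* − π_τ*, r⟩ ≤ τ·W((A−1)/e), where W is the principal branch of the Lambert W function. -/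
theorem stmt_10 (A : ℕ) (hA : 2 ≤ A) (τ : ℝ) (hτ : 0 < τ) (r : Fin A → ℝ)
    (astar : Fin A) (hopt : ∀ a, r a ≤ r astar)
    (w : ℝ) (hw : 0 ≤ w) (hW : w * Real.exp w = ((A : ℝ) - 1) / Real.exp 1) :
    ∑ a, (Real.exp (r a / τ) / ∑ a', Real.exp (r a' / τ)) * (r astar - r a) ≤ τ * w := by
  set S := ∑ a', Real.exp (r a' / τ) with hS
  have hSpos : 0 < S :=
    Finset.sum_pos (fun a _ => Real.exp_pos _) ⟨astar, Finset.mem_univ _⟩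
  have hA1 : (1:ℝ) < (A:ℝ) := by
    have : (2:ℝ) ≤ (A:ℝ) := by exact_mod_cast hA
    linarith
  -- (A-1) = w * exp (w+1)
  have hAw : (A:ℝ) - 1 = w * Real.exp (w + 1) := by
    rw [Real.exp_add]
    have he := Real.exp_pos 1
    field_simp at hW
    linarith [hW]
  have hEw : ((A:ℝ) - 1) * Real.exp (-(w + 1)) = w := by
    have h0 : w + 1 + -(w + 1) = 0 := by ring
    rw [hAw, mul_assoc, ← Real.exp_add, h0, Real.exp_zero, mul_one]
  -- per-term bound
  have key : ∀ a : Fin A, Real.exp (r a / τ) * (r astar - r a)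
      ≤ τ * w * Real.exp (r a / τ) + τ * Real.exp (r astar / τ - (w + 1)) := by
    intro a
    set x : ℝ := (r astar - r a) / τ with hxdef
    have hra : r a / τ = r astar / τ - x := by
      rw [hxdef, sub_div]; ring
    have hbase : (x - w) * Real.exp (-x) ≤ Real.exp (-(w + 1)) := by
      have h1 : (x - w - 1) + 1 ≤ Real.exp (x - w - 1) := Real.add_one_le_exp _
      have h2 : Real.exp (x - w - 1) * Real.exp (-x) = Real.exp (-(w + 1)) := by
        rw [← Real.exp_add]; ring_nf
      nlinarith [Real.exp_pos (-x),
        mul_le_mul_of_nonneg_right h1 (Real.exp_pos (-x)).le]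
    have hsplit : Real.exp (r a / τ) = Real.exp (r astar / τ) * Real.exp (-x) := by
      rw [hra, ← Real.exp_add]; ring_nf
    have hsplit2 : Real.exp (r astar / τ - (w + 1))
        = Real.exp (r astar / τ) * Real.exp (-(w + 1)) := by
      rw [← Real.exp_add]; ring_nf
    have hrx : r astar - r a = τ * x := by
      rw [hxdef]; field_simp [hτ.ne']
    rw [hsplit, hsplit2, hrx]
    have hE := Real.exp_pos (r astar / τ)
    nlinarith [mul_le_mul_of_nonneg_left hbase (mul_pos hτ hE).le]
  -- rewrite the goal
  have hgoal : (∑ a, Real.exp (r a / τ) / S * (r astar - r a))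
      = (∑ a, Real.exp (r a / τ) * (r astar - r a)) / S := by
    rw [Finset.sum_div]
    exact Finset.sum_congr rfl (fun a _ => by ring)
  rw [hgoal, div_le_iff₀ hSpos]
  -- drop the astar term (it is zero) and bound the rest
  have hzero : Real.exp (r astar / τ) * (r astar - r astar) = 0 := by ring
  have herase : (∑ a, Real.exp (r a / τ) * (r astar - r a))
      = ∑ a ∈ Finset.univ.erase astar, Real.exp (r a / τ) * (r astar - r a) := by
    rw [← Finset.add_sum_erase _ _ (Finset.mem_univ astar), hzero, zero_add]
  rw [herase]
  have hcard : ((Finset.univ.erase astar).card : ℝ) = (A:ℝ) - 1 := by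
    rw [Finset.card_erase_of_mem (Finset.mem_univ astar)]
    simp only [Finset.card_univ, Fintype.card_fin]
    rw [Nat.cast_sub (by omega), Nat.cast_one]
  have hstep : ∑ a ∈ Finset.univ.erase astar, Real.exp (r a / τ) * (r astar - r a)
      ≤ ∑ a ∈ Finset.univ.erase astar,
        (τ * w * Real.exp (r a / τ) + τ * Real.exp (r astar / τ - (w + 1))) :=
    Finset.sum_le_sum (fun a _ => key a)
  refine hstep.trans ?_
  rw [Finset.sum_add_distrib, Finset.sum_const, ← Finset.mul_sum, nsmul_eq_mul, hcard]
  have hsumerase : ∑ a ∈ Finset.univ.erase astar, Real.exp (r a / τ)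
      = S - Real.exp (r astar / τ) := by
    rw [hS, ← Finset.add_sum_erase _ _ (Finset.mem_univ astar)]
    ring
  rw [hsumerase]
  have hsplit2 : Real.exp (r astar / τ - (w + 1))
      = Real.exp (r astar / τ) * Real.exp (-(w + 1)) := by
    rw [← Real.exp_add]; ring_nf
  rw [hsplit2]
  have hfinal : ((A:ℝ) - 1) * (τ * (Real.exp (r astar / τ) * Real.exp (-(w + 1))))
      = τ * w * Real.exp (r astar / τ) := by
    linear_combination τ * Real.exp (r astar / τ) * hEw
  linarith [hfinal]
end

section
/- For the function Δ ↦ (A−1)·Δ / (e^{Δ/τ} + A − 1) with A ≥ 2 integer and τ > 0, the unique stationary point over Δ > 0 is Δ = τ·(W((A−1)/e) + 1) and at this point the function value equals τ·W((A−1)/e). -/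
lemma mono_aux : StrictMonoOn (fun x : ℝ => x * Real.exp x) (Set.Ici (-1)) := by
  apply strictMonoOn_of_deriv_pos (convex_Ici _)
  · exact (continuous_id.mul Real.continuous_exp).continuousOn
  · intro x hx
    rw [interior_Ici] at hx
    have h : HasDerivAt (fun x : ℝ => x * Real.exp x) (1 * Real.exp x + x * Real.exp x) x :=
      (hasDerivAt_id x).mul (Real.hasDerivAt_exp x)
    rw [h.deriv]
    have := Real.exp_pos x
    have hx' : (-1 : ℝ) < x := hx
    nlinarith

theorem stmt_11 (A : ℕ) (hA : 2 ≤ A) (τ : ℝ) (hτ : 0 < τ)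
    (w : ℝ) (hw : 0 ≤ w) (hW : w * Real.exp w = ((A : ℝ) - 1) / Real.exp 1) :
    (∀ Δ : ℝ, 0 < Δ →
      (deriv (fun Δ : ℝ => ((A : ℝ) - 1) * Δ / (Real.exp (Δ / τ) + (A : ℝ) - 1)) Δ = 0 ↔
        Δ = τ * (w + 1))) ∧
    ((A : ℝ) - 1) * (τ * (w + 1)) / (Real.exp ((τ * (w + 1)) / τ) + (A : ℝ) - 1) = τ * w := by
  have hτ' : τ ≠ 0 := ne_of_gt hτ
  set c : ℝ := (A : ℝ) - 1 with hc
  have hA2 : (2 : ℝ) ≤ (A : ℝ) := by exact_mod_cast hA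
  have hc1 : 1 ≤ c := by simp [hc]; linarith
  have hcpos : 0 < c := by linarith
  have hE1 : (0:ℝ) < Real.exp 1 := Real.exp_pos 1
  have hwpos : 0 < w := by
    rcases lt_or_eq_of_le hw with h | h
    · exact h
    · exfalso
      rw [← h] at hW
      simp at hW
      have : c / Real.exp 1 > 0 := div_pos hcpos hE1
      linarith
  constructor
  · intro Δ hΔ
    have hEpos : 0 < Real.exp (Δ / τ) := Real.exp_pos _
    have hden : Real.exp (Δ / τ) + c ≠ 0 := by positivity
    -- compute derivative
    have h1 : HasDerivAt (fun Δ : ℝ => c * Δ) c Δ := by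
      simpa using (hasDerivAt_id Δ).const_mul c
    have h2 : HasDerivAt (fun Δ : ℝ => Real.exp (Δ / τ) + c) (Real.exp (Δ / τ) * (1 / τ)) Δ := by
      have := (((hasDerivAt_id Δ).div_const τ).exp).add_const c
      simpa using this
    have hd : HasDerivAt (fun Δ : ℝ => c * Δ / (Real.exp (Δ / τ) + c))
        ((c * (Real.exp (Δ / τ) + c) - c * Δ * (Real.exp (Δ / τ) * (1 / τ))) /
          (Real.exp (Δ / τ) + c) ^ 2) Δ := h1.div h2 hden
    have hfeq : (fun Δ : ℝ => ((A : ℝ) - 1) * Δ / (Real.exp (Δ / τ) + (A : ℝ) - 1)) =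
        (fun Δ : ℝ => c * Δ / (Real.exp (Δ / τ) + c)) := by
      funext x; rw [hc]; ring_nf
    rw [hfeq, hd.deriv]
    rw [div_eq_zero_iff]
    have hsq : (Real.exp (Δ / τ) + c) ^ 2 ≠ 0 := pow_ne_zero _ hden
    constructor
    · rintro (hnum | habs)
      · -- numerator zero
        have key : (Δ / τ - 1) * Real.exp (Δ / τ) = c := by
          have hΔτ : Δ / τ = Δ * (1 / τ) := by ring
          field_simp at hnum ⊢
          nlinarith [hnum]
        -- rewrite exp(Δ/τ) = exp(Δ/τ - 1) * exp 1
        set x := Δ / τ - 1 with hx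
        have hexp : Real.exp (Δ / τ) = Real.exp x * Real.exp 1 := by
          rw [← Real.exp_add, hx]; ring_nf
        have hxw : x * Real.exp x = w * Real.exp w := by
          rw [hW]
          rw [hexp] at key
          field_simp
          linarith [key]
        have hxmem : x ∈ Set.Ici (-1 : ℝ) := by
          have : 0 < Δ / τ := div_pos hΔ hτ
          simp [hx]; linarith
        have hwmem : w ∈ Set.Ici (-1 : ℝ) := by simp; linarith
        have : x = w := mono_aux.injOn hxmem hwmem hxw
        have : Δ / τ = w + 1 := by rw [hx] at this; linarith
        field_simp at this
        linarith
      · exact absurd habs hsq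
    · intro hΔeq
      left
      subst hΔeq
      have hΔτ : τ * (w + 1) / τ = w + 1 := by field_simp
      rw [hΔτ]
      have hexp : Real.exp (w + 1) = Real.exp w * Real.exp 1 := by
        rw [← Real.exp_add]
      rw [hexp]
      have hkey : w * (Real.exp w * Real.exp 1) = c := by
        field_simp at hW
        linear_combination hW
      field_simp
      linear_combination (-((A : ℝ) - 1)) * hkey
  · have hΔτ : τ * (w + 1) / τ = w + 1 := by field_simp
    rw [hΔτ]
    have hkey : w * (Real.exp w * Real.exp 1) = c := by
      field_simp at hW
      nlinarith [hW]
    have hexp' : Real.exp (w + 1) = c / w := by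
      rw [eq_div_iff (ne_of_gt hwpos), Real.exp_add]
      linear_combination hkey
    rw [hexp']
    have hAc : (A : ℝ) = c + 1 := by rw [hc]; ring
    rw [hAc]
    have hdeq : c / w + (c + 1) - 1 = c * (1 + w) / w := by field_simp; ring
    rw [hdeq]
    have hdpos : 0 < c * (1 + w) / w := by
      apply div_pos _ hwpos; nlinarith
    rw [div_eq_iff (ne_of_gt hdpos)]
    field_simp
    ring
end

section
/- Fix reward vector r ∈ ℝ^A and temperatures 0 < τ₂ < τ₁ ≤ 1. Define f^τ(π) := ⟨π, r − τ log π⟩ and f^{*_τ} := max over probability vectors π of f^τ(π). Then for any probability vector π, (f^{*_{τ₂}} − f^{τ₂}(π)) − (f^{*_{τ₁}} − f^{τ₁}(π)) ≤ ⟨π* − π_{τ₁}*, r⟩ + τ₁·log A, where π_{τ₁}* := argmax f^{τ₁} and π* is the optimal (unregularized) policy. -/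
def IsProbVec {A : ℕ} (q : Fin A → ℝ) : Prop := (∀ a, 0 ≤ q a) ∧ ∑ a, q a = 1

noncomputable def entReg {A : ℕ} (r : Fin A → ℝ) (τ : ℝ) (q : Fin A → ℝ) : ℝ :=
  ∑ a, q a * (r a - τ * Real.log (q a))

lemma entReg_eq {A : ℕ} (r : Fin A → ℝ) (τ : ℝ) (q : Fin A → ℝ) :
    entReg r τ q = ∑ a, q a * r a - τ * ∑ a, q a * Real.log (q a) := by
  simp [entReg, mul_sub, Finset.sum_sub_distrib, Finset.mul_sum, mul_left_comm]

lemma negent_nonpos {A : ℕ} (q : Fin A → ℝ) (hq : IsProbVec q) :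
    ∑ a, q a * Real.log (q a) ≤ 0 := by
  apply Finset.sum_nonpos
  intro a _
  have h1 : q a ≤ 1 := by
    rw [← hq.2]
    exact Finset.single_le_sum (fun i _ => hq.1 i) (Finset.mem_univ a)
  exact mul_nonpos_of_nonneg_of_nonpos (hq.1 a) (Real.log_nonpos (hq.1 a) h1)

lemma neg_negent_le_log {A : ℕ} (hA : 1 ≤ A) (q : Fin A → ℝ) (hq : IsProbVec q) :
    -∑ a, q a * Real.log (q a) ≤ Real.log A := by
  have hA0 : (0:ℝ) < A := by exact_mod_cast Nat.lt_of_lt_of_le Nat.zero_lt_one hA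
  have key : ∀ a : Fin A, q a * (Real.log (1 / A) - Real.log (q a)) ≤ 1 / A - q a := by
    intro a
    rcases eq_or_lt_of_le (hq.1 a) with h | h
    · rw [← h]; simp only [zero_mul, zero_sub, sub_zero]; positivity
    · have hx : (0:ℝ) < (1 / A) / q a := by positivity
      have hlog : Real.log (1 / A) - Real.log (q a) = Real.log ((1 / A) / q a) :=
        (Real.log_div (by positivity) (ne_of_gt h)).symm
      rw [hlog]
      calc q a * Real.log ((1 / A) / q a) ≤ q a * ((1 / A) / q a - 1) :=
            mul_le_mul_of_nonneg_left (Real.log_le_sub_one_of_pos hx) (le_of_lt h)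
        _ = 1 / A - q a := by field_simp
  have hsum : ∑ a, q a * (Real.log (1 / A) - Real.log (q a)) ≤ 0 := by
    calc ∑ a, q a * (Real.log (1 / A) - Real.log (q a))
        ≤ ∑ a : Fin A, (1 / A - q a) := Finset.sum_le_sum (fun a _ => key a)
      _ = A * (1 / A) - 1 := by
          rw [Finset.sum_sub_distrib, hq.2, Finset.sum_const]
          simp [mul_comm]
      _ = 0 := by field_simp; ring
  have hexp : ∑ a, q a * (Real.log (1 / A) - Real.log (q a))
      = Real.log (1 / A) - ∑ a, q a * Real.log (q a) := by
    simp only [mul_sub]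
    rw [Finset.sum_sub_distrib, ← Finset.sum_mul, hq.2, one_mul]
  rw [hexp, Real.log_div one_ne_zero (ne_of_gt hA0), Real.log_one] at hsum
  linarith

theorem stmt_13 (A : ℕ) (hA : 1 ≤ A) (r : Fin A → ℝ) (τ1 τ2 : ℝ)
    (hτ2 : 0 < τ2) (hτ : τ2 < τ1) (hτ1 : τ1 ≤ 1)
    (π2 π1 πstar q : Fin A → ℝ)
    (hπ2 : IsProbVec π2) (hπ1 : IsProbVec π1) (hπs : IsProbVec πstar) (hq : IsProbVec q)
    (hmax2 : ∀ q', IsProbVec q' → entReg r τ2 q' ≤ entReg r τ2 π2)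
    (hmax1 : ∀ q', IsProbVec q' → entReg r τ1 q' ≤ entReg r τ1 π1)
    (hmaxs : ∀ q', IsProbVec q' → ∑ a, q' a * r a ≤ ∑ a, πstar a * r a) :
    (entReg r τ2 π2 - entReg r τ2 q) - (entReg r τ1 π1 - entReg r τ1 q) ≤
      (∑ a, πstar a * r a - ∑ a, π1 a * r a) + τ1 * Real.log A := by
  rw [entReg_eq, entReg_eq, entReg_eq, entReg_eq]
  have h1 : ∑ a, π2 a * r a ≤ ∑ a, πstar a * r a := hmaxs π2 hπ2
  have h2 : -∑ a, π2 a * Real.log (π2 a) ≤ Real.log A := neg_negent_le_log hA π2 hπ2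
  have h3 : ∑ a, π1 a * Real.log (π1 a) ≤ 0 := negent_nonpos π1 hπ1
  have h4 : -∑ a, q a * Real.log (q a) ≤ Real.log A := neg_negent_le_log hA q hq
  have h5 : ∑ a, q a * Real.log (q a) ≤ 0 := negent_nonpos q hq
  have hb2 : τ2 * (-∑ a, π2 a * Real.log (π2 a)) ≤ τ2 * Real.log A :=
    mul_le_mul_of_nonneg_left h2 (le_of_lt hτ2)
  have hb4 : (τ1 - τ2) * (-∑ a, q a * Real.log (q a)) ≤ (τ1 - τ2) * Real.log A :=
    mul_le_mul_of_nonneg_left h4 (by linarith)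
  have hb3 : τ1 * ∑ a, π1 a * Real.log (π1 a) ≤ 0 :=
    mul_nonpos_of_nonneg_of_nonpos (by linarith) h3
  nlinarith [hb2, hb4, hb3, h1]
end

section
/- Let T ≥ 2 and β ∈ [1, T), and set α := (β/T)^{1/T}. Then α^{T+1}/(1 − α) ≤ 2β/log(T/β). -/
theorem stmt_16 (T β : ℝ) (hT : 2 ≤ T) (hβ1 : 1 ≤ β) (hβT : β < T) :
    ((β / T) ^ (1 / T)) ^ (T + 1) / (1 - (β / T) ^ (1 / T)) ≤
      2 * β / Real.log (T / β) := by
  have hT0 : (0:ℝ) < T := by linarith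
  have hβ0 : (0:ℝ) < β := by linarith
  have hbT0 : 0 < β / T := div_pos hβ0 hT0
  have hbT1 : β / T < 1 := (div_lt_one hT0).mpr hβT
  set c := Real.log (T / β) with hc
  have hc0 : 0 < c := Real.log_pos ((one_lt_div hβ0).mpr hβT)
  -- c ≤ T
  have hcT : c ≤ T := by
    have h1 : T / β ≤ T := by
      rw [div_le_iff₀ hβ0]; nlinarith
    have h2 : c ≤ Real.log T := Real.log_le_log (by positivity) h1
    have h3 : Real.log T ≤ T - 1 := Real.log_le_sub_one_of_pos hT0
    linarith
  set x := c / T with hx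
  have hx0 : 0 < x := div_pos hc0 hT0
  have hx1 : x ≤ 1 := (div_le_one hT0).mpr hcT
  -- α = exp (-x)
  have hα : (β / T) ^ (1 / T) = Real.exp (-x) := by
    rw [Real.rpow_def_of_pos hbT0]
    congr 1
    rw [hx, hc, Real.log_div (ne_of_gt hβ0) (ne_of_gt hT0),
      Real.log_div (ne_of_gt hT0) (ne_of_gt hβ0)]
    field_simp
    ring
  -- numerator bound : α^(T+1) ≤ β/T
  have hnum : ((β / T) ^ (1 / T)) ^ (T + 1) ≤ β / T := by
    rw [← Real.rpow_mul hbT0.le]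
    calc (β / T) ^ (1 / T * (T + 1))
        ≤ (β / T) ^ (1:ℝ) := by
          apply Real.rpow_le_rpow_of_exponent_ge hbT0 hbT1.le
          rw [one_div, inv_mul_eq_div, le_div_iff₀ hT0]
          linarith
      _ = β / T := Real.rpow_one _
  -- denominator bound : 1 - α ≥ x/2
  have hden : x / 2 ≤ 1 - (β / T) ^ (1 / T) := by
    rw [hα]
    have hE : x + 1 ≤ Real.exp x := Real.add_one_le_exp x
    have hprod : Real.exp (-x) * Real.exp x = 1 := by
      rw [← Real.exp_add]; simp
    have hepos : 0 < Real.exp (-x) := Real.exp_pos _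
    nlinarith [hepos, hE, hprod, hx0, hx1]
  have hden0 : 0 < x / 2 := by positivity
  calc ((β / T) ^ (1 / T)) ^ (T + 1) / (1 - (β / T) ^ (1 / T))
      ≤ (β / T) / (x / 2) := div_le_div₀ hbT0.le hnum hden0 hden
    _ = 2 * β / c := by
        rw [hx]; field_simp
end

section
/- In the exact two-arm bandit with softmax parameterization, let f(θ) = ⟨π_θ, r⟩ with gradient components ∇f(θ)(a) = π_θ(a)(r(a) − ⟨π_θ, r⟩). For a 2-dimensional parameter with p := π_θ(a*) the probability of the optimal arm and Δ* := r(a*) − r(a') the gap, the gradient norm satisfies ‖∇f(θ)‖ = √2·p(1−p)·Δ* and the suboptimality satisfies ⟨π* − π_θ, r⟩ = (1−p)·Δ*; consequently ‖∇f(θ)‖ ≥ p·⟨π* − π_θ, r⟩ and ‖∇f(θ)‖ ≤ √2·⟨π* − π_θ, r⟩. -/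
theorem stmt_18 (r1 r2 p : ℝ) (hr : r2 < r1) (hp0 : 0 < p) (hp1 : p < 1) :
    let vbar := p * r1 + (1 - p) * r2
    let gnorm := Real.sqrt ((p * (r1 - vbar)) ^ 2 + ((1 - p) * (r2 - vbar)) ^ 2)
    let subopt := r1 - vbar
    gnorm = Real.sqrt 2 * (p * (1 - p) * (r1 - r2)) ∧
    subopt = (1 - p) * (r1 - r2) ∧
    p * subopt ≤ gnorm ∧ gnorm ≤ Real.sqrt 2 * subopt := by
  intro vbar gnorm subopt
  have hx : (0:ℝ) ≤ p * (1 - p) * (r1 - r2) :=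
    le_of_lt (mul_pos (mul_pos hp0 (by linarith)) (by linarith))
  have h1 : gnorm = Real.sqrt 2 * (p * (1 - p) * (r1 - r2)) := by
    have : (p * (r1 - vbar)) ^ 2 + ((1 - p) * (r2 - vbar)) ^ 2
        = 2 * (p * (1 - p) * (r1 - r2)) ^ 2 := by simp only [vbar]; ring
    rw [show gnorm = Real.sqrt ((p * (r1 - vbar)) ^ 2 + ((1 - p) * (r2 - vbar)) ^ 2) from rfl,
      this, Real.sqrt_mul (by norm_num), Real.sqrt_sq hx]
  have h2 : subopt = (1 - p) * (r1 - r2) := by simp only [subopt, vbar]; ring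
  refine ⟨h1, h2, ?_, ?_⟩
  · rw [h1, h2]
    have h2le : (1:ℝ) ≤ Real.sqrt 2 := by
      rw [show (1:ℝ) = Real.sqrt 1 by simp]
      exact Real.sqrt_le_sqrt (by norm_num)
    nlinarith [Real.sqrt_nonneg 2]
  · rw [h1, h2]
    have : p * (1 - p) * (r1 - r2) ≤ (1 - p) * (r1 - r2) := by nlinarith
    nlinarith [Real.sqrt_nonneg 2]
end
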